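/- Let α > 0 and let g ∈ L¹(ℝ, ℂ) satisfy ∫_ℝ (ln(1 + |u|))^α |g(u)| du < ∞. Define δ(x) = (1/2π) ∫_ℝ e^{ixu} g(u) du and δ_{jk}(x) = 2^{j/2} δ(2^j x − k) for j ∈ ℕ₀, k ∈ ℤ. Set R_{0α} = (1/π) ∫_ℝ (ln(e^α + |u|/2))^α |g(u)| du and R_{1α} = (1/π) ∫_ℝ (ln(e^α + |u| + 1))^α |g(u)| du. Then for all x, y ∈ ℝ with x ≠ y and all k ∈ ℤ: |δ_{0k}(x) − δ_{0k}(y)| ≤ R_{0α} · (ln(e^α + 1/|x − y|))^{−α}, and for every integer j ≥ 1: |δ_{jk}(x) − δ_{jk}(y)| ≤ 2^{j/2} j^α R_{1α} · (ln(e^α + 1/|x − y|))^{−α}. -/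

import Mathlib

open MeasureTheory

/- ------------ elementary complex exponential bounds ------------ -/

lemma aux_norm_exp_I (t : ℝ) : ‖Complex.exp (Complex.I * t)‖ = 1 := by
  simp [Complex.norm_exp]

lemma aux_exp_sub_one (θ : ℝ) : ‖Complex.exp (Complex.I * θ) - 1‖ ≤ |θ| := by
  have h1 : Complex.exp (Complex.I * θ) - 1
      = ((Real.cos θ - 1 : ℝ) : ℂ) + (Real.sin θ : ℝ) * Complex.I := by
    rw [mul_comm, Complex.exp_mul_I]
    push_cast
    ring
  rw [h1]
  have h2 : ‖((Real.cos θ - 1 : ℝ) : ℂ) + (Real.sin θ : ℝ) * Complex.I‖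
      = Real.sqrt ((Real.cos θ - 1) ^ 2 + Real.sin θ ^ 2) := by
    rw [Complex.norm_def, Complex.normSq_apply]
    simp [pow_two, Complex.cos_ofReal_re, Complex.sin_ofReal_re]
  rw [h2]
  have h3 : (Real.cos θ - 1) ^ 2 + Real.sin θ ^ 2 ≤ θ ^ 2 := by
    have hs : Real.sin θ ^ 2 = 1 - Real.cos θ ^ 2 := by
      have := Real.sin_sq_add_cos_sq θ; linarith
    have hc := Real.one_sub_sq_div_two_le_cos (x := θ)
    have hc1 := Real.cos_le_one θ
    nlinarith [Real.neg_one_le_cos θ]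
  calc Real.sqrt ((Real.cos θ - 1) ^ 2 + Real.sin θ ^ 2) ≤ Real.sqrt (θ ^ 2) :=
        Real.sqrt_le_sqrt h3
    _ = |θ| := Real.sqrt_sq_eq_abs θ

lemma aux_exp_sub_exp (a b : ℝ) :
    ‖Complex.exp (Complex.I * a) - Complex.exp (Complex.I * b)‖ ≤ |a - b| := by
  have h : Complex.exp (Complex.I * a) - Complex.exp (Complex.I * b)
      = Complex.exp (Complex.I * b) * (Complex.exp (Complex.I * ((a : ℝ) - b : ℝ)) - 1) := by
    rw [mul_sub, ← Complex.exp_add, mul_one]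
    push_cast
    ring_nf
  rw [h, norm_mul, aux_norm_exp_I, one_mul]
  exact aux_exp_sub_one (a - b)

/- ------------ logarithmic inequalities ------------ -/

lemma aux_anti (α : ℝ) (hα : 0 < α) {a s : ℝ} (ha : 0 < a) (has : a ≤ s) :
    Real.log (Real.exp α + s) ^ α ≤ (s / a) * Real.log (Real.exp α + a) ^ α := by
  have hs : 0 < s := lt_of_lt_of_le ha has
  have hLa : α ≤ Real.log (Real.exp α + a) := by
    calc α = Real.log (Real.exp α) := (Real.log_exp α).symm
    _ ≤ Real.log (Real.exp α + a) := Real.log_le_log (Real.exp_pos α) (by linarith)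
  have hLs : Real.log (Real.exp α + a) ≤ Real.log (Real.exp α + s) :=
    Real.log_le_log (by positivity) (by linarith)
  set La := Real.log (Real.exp α + a) with hLadef
  set Ls := Real.log (Real.exp α + s) with hLsdef
  have hLa0 : 0 < La := lt_of_lt_of_le hα hLa
  have hLs0 : 0 < Ls := lt_of_lt_of_le hLa0 hLs
  have h1 : Ls - La ≤ Real.log s - Real.log a := by
    rw [hLsdef, hLadef, ← Real.log_div (by positivity) (by positivity),
      ← Real.log_div (by positivity) (by positivity)]
    apply Real.log_le_log (by positivity)
    rw [div_le_div_iff₀ (by positivity) (by positivity)]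
    nlinarith [Real.exp_pos α]
  have hlogmono : 0 ≤ Real.log Ls - Real.log La :=
    sub_nonneg.2 (Real.log_le_log hLa0 hLs)
  have h2 : α * (Real.log Ls - Real.log La) ≤ Ls - La := by
    have hstep : Real.log Ls - Real.log La ≤ (Ls - La) / La := by
      rw [← Real.log_div (by positivity) (by positivity)]
      have h' := Real.log_le_sub_one_of_pos (x := Ls / La) (by positivity)
      have h'' : Ls / La - 1 = (Ls - La) / La := by field_simp
      linarith
    calc α * (Real.log Ls - Real.log La) ≤ La * ((Ls - La) / La) :=
          mul_le_mul hLa hstep hlogmono hLa0.le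
      _ = Ls - La := by field_simp
  rw [Real.rpow_def_of_pos hLs0, Real.rpow_def_of_pos hLa0]
  have hsa : s / a = Real.exp (Real.log s - Real.log a) := by
    rw [Real.exp_sub, Real.exp_log hs, Real.exp_log ha]
  rw [hsa, ← Real.exp_add]
  apply Real.exp_le_exp.2
  rw [mul_sub] at h2
  linarith

lemma aux_min (α : ℝ) (hα : 0 < α) {s a : ℝ} (hs : 0 < s) (ha : 0 ≤ a) :
    min 2 (2 * a / s) * Real.log (Real.exp α + s) ^ α
      ≤ 2 * Real.log (Real.exp α + a) ^ α := by
  have hLs0 : 0 < Real.log (Real.exp α + s) := by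
    calc (0:ℝ) < α := hα
    _ = Real.log (Real.exp α) := (Real.log_exp α).symm
    _ ≤ Real.log (Real.exp α + s) := Real.log_le_log (Real.exp_pos α) (by linarith)
  have hLspow : (0:ℝ) ≤ Real.log (Real.exp α + s) ^ α := (Real.rpow_pos_of_pos hLs0 α).le
  rcases le_or_gt s a with h | h
  · have hmono : Real.log (Real.exp α + s) ^ α ≤ Real.log (Real.exp α + a) ^ α := by
      apply Real.rpow_le_rpow hLs0.le (Real.log_le_log (by positivity) (by linarith)) hα.le
    calc min 2 (2 * a / s) * Real.log (Real.exp α + s) ^ α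
        ≤ 2 * Real.log (Real.exp α + s) ^ α := by
          apply mul_le_mul_of_nonneg_right (min_le_left _ _) hLspow
      _ ≤ 2 * Real.log (Real.exp α + a) ^ α := by linarith
  · rcases eq_or_lt_of_le ha with rfl | ha0
    · simp only [mul_zero, zero_div, min_eq_right (by norm_num : (0:ℝ) ≤ 2), zero_mul]
      have h0 : (0:ℝ) ≤ Real.log (Real.exp α + 0) := by
        rw [add_zero, Real.log_exp]; exact hα.le
      exact mul_nonneg (by norm_num) (Real.rpow_nonneg h0 α)
    · calc min 2 (2 * a / s) * Real.log (Real.exp α + s) ^ α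
          ≤ (2 * a / s) * Real.log (Real.exp α + s) ^ α :=
            mul_le_mul_of_nonneg_right (min_le_right _ _) hLspow
        _ ≤ (2 * a / s) * ((s / a) * Real.log (Real.exp α + a) ^ α) := by
            apply mul_le_mul_of_nonneg_left (aux_anti α hα ha0 h.le) (by positivity)
        _ = 2 * Real.log (Real.exp α + a) ^ α := by field_simp

lemma aux_dyadic_log (α : ℝ) (hα : 0 < α) (m : ℕ) {t : ℝ} (ht : 0 ≤ t) :
    Real.log (Real.exp α + 2 ^ m * t) ≤ (m + 1 : ℝ) * Real.log (Real.exp α + t + 1) := by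
  have he : (1:ℝ) ≤ Real.exp α := Real.one_le_exp hα.le
  have h2 : (2:ℝ) ≤ Real.exp α + t + 1 := by linarith
  have key : Real.exp α + 2 ^ m * t ≤ (Real.exp α + t + 1) ^ (m + 1) := by
    have h1 : Real.exp α + 2 ^ m * t ≤ 2 ^ m * (Real.exp α + t) := by
      have : (1:ℝ) ≤ 2 ^ m := one_le_pow₀ (by norm_num : (1:ℝ) ≤ 2)
      nlinarith
    have h2m : (2:ℝ) ^ m ≤ (Real.exp α + t + 1) ^ m :=
      pow_le_pow_left₀ (by norm_num) h2 m
    calc Real.exp α + 2 ^ m * t ≤ 2 ^ m * (Real.exp α + t) := h1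
      _ ≤ (Real.exp α + t + 1) ^ m * (Real.exp α + t + 1) := by
          apply mul_le_mul h2m (by linarith) (by linarith) (by positivity)
      _ = (Real.exp α + t + 1) ^ (m + 1) := by ring
  calc Real.log (Real.exp α + 2 ^ m * t) ≤ Real.log ((Real.exp α + t + 1) ^ (m + 1)) :=
        Real.log_le_log (by positivity) key
    _ = (m + 1 : ℝ) * Real.log (Real.exp α + t + 1) := by
        rw [Real.log_pow]; push_cast; ring

lemma aux_rpow_add (α : ℝ) (hα : 0 < α) {A B : ℝ} (hA : 0 ≤ A) (hB : 0 ≤ B) :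
    (A + B) ^ α ≤ 2 ^ α * (A ^ α + B ^ α) := by
  have h1 : A + B ≤ 2 * max A B := by
    rcases le_total A B with h | h
    · simp [max_eq_right h]; linarith
    · simp [max_eq_left h]; linarith
  have h2 : (A + B) ^ α ≤ (2 * max A B) ^ α :=
    Real.rpow_le_rpow (by linarith) h1 hα.le
  have h3 : (2 * max A B) ^ α = 2 ^ α * (max A B) ^ α :=
    Real.mul_rpow (by norm_num) (le_max_iff.2 (Or.inl hA))
  have h4 : (max A B) ^ α ≤ A ^ α + B ^ α := by
    rcases le_total A B with h | h
    · rw [max_eq_right h]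
      have := Real.rpow_nonneg hA α; linarith
    · rw [max_eq_left h]
      have := Real.rpow_nonneg hB α; linarith
  calc (A + B) ^ α ≤ 2 ^ α * (max A B) ^ α := by rw [← h3]; exact h2
    _ ≤ 2 ^ α * (A ^ α + B ^ α) := by
        apply mul_le_mul_of_nonneg_left h4 (Real.rpow_nonneg (by norm_num) α)

/- ------------ integrability of the logarithmic weights ------------ -/

lemma aux_integrable (α : ℝ) (hα : 0 < α) (g : ℝ → ℂ) (hg : Integrable g)
    (hglog : Integrable (fun u : ℝ => Real.log (1 + |u|) ^ α * ‖g u‖))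
    (f : ℝ → ℝ) (hfm : Measurable f) (hf1 : ∀ u, 1 ≤ f u)
    (hfle : ∀ u, f u ≤ (Real.exp α + 1) * (1 + |u|)) :
    Integrable (fun u : ℝ => Real.log (f u) ^ α * ‖g u‖) := by
  have hA : (0:ℝ) ≤ Real.log (Real.exp α + 1) := Real.log_nonneg (by
    have := Real.one_le_exp hα.le; linarith)
  set C : ℝ := 2 ^ α * Real.log (Real.exp α + 1) ^ α with hC
  have hmaj : Integrable (fun u : ℝ =>
      C * ‖g u‖ + 2 ^ α * (Real.log (1 + |u|) ^ α * ‖g u‖)) :=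
    (hg.norm.const_mul C).add (hglog.const_mul _)
  apply hmaj.mono'
  · apply AEStronglyMeasurable.mul ?_ hg.norm.aestronglyMeasurable
    exact ((Real.measurable_log.comp hfm).pow_const _).aestronglyMeasurable
  · filter_upwards with u
    have hgu : (0:ℝ) ≤ ‖g u‖ := norm_nonneg _
    have hlf : 0 ≤ Real.log (f u) := Real.log_nonneg (hf1 u)
    have h1 : Real.log (f u) ≤ Real.log (Real.exp α + 1) + Real.log (1 + |u|) := by
      rw [← Real.log_mul (by positivity) (by positivity)]
      exact Real.log_le_log (by linarith [hf1 u]) (hfle u)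
    have h2 : Real.log (f u) ^ α
        ≤ 2 ^ α * (Real.log (Real.exp α + 1) ^ α + Real.log (1 + |u|) ^ α) := by
      calc Real.log (f u) ^ α
          ≤ (Real.log (Real.exp α + 1) + Real.log (1 + |u|)) ^ α :=
            Real.rpow_le_rpow hlf h1 hα.le
        _ ≤ _ := aux_rpow_add α hα hA (Real.log_nonneg (by simp [abs_nonneg]))
    have hnn : (0:ℝ) ≤ Real.log (f u) ^ α * ‖g u‖ :=
      mul_nonneg (Real.rpow_nonneg hlf α) hgu
    rw [Real.norm_of_nonneg hnn]
    calc Real.log (f u) ^ α * ‖g u‖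
        ≤ (2 ^ α * (Real.log (Real.exp α + 1) ^ α + Real.log (1 + |u|) ^ α)) * ‖g u‖ :=
          mul_le_mul_of_nonneg_right h2 hgu
      _ = C * ‖g u‖ + 2 ^ α * (Real.log (1 + |u|) ^ α * ‖g u‖) := by rw [hC]; ring

/- ------------ core Fourier estimate ------------ -/

lemma aux_core (g : ℝ → ℂ) (hg : Integrable g) (δ : ℝ → ℂ)
    (hδ : ∀ x : ℝ, δ x =
      (1 / (2 * (Real.pi : ℂ))) * ∫ u : ℝ, Complex.exp (Complex.I * x * u) * g u)
    (x y : ℝ) (ψ : ℝ → ℝ) (hψ : Integrable ψ)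
    (hpt : ∀ u : ℝ, min 2 (|u| * |x - y|) * ‖g u‖ ≤ ψ u) :
    ‖δ x - δ y‖ ≤ (1 / (2 * Real.pi)) * ∫ u : ℝ, ψ u := by
  have hint : ∀ z : ℝ, Integrable (fun u : ℝ => Complex.exp (Complex.I * z * u) * g u) := by
    intro z
    apply hg.bdd_mul (c := 1)
    · exact (Complex.continuous_exp.comp (by continuity)).aestronglyMeasurable
    · refine ae_of_all _ (fun u => ?_)
      rw [mul_assoc]
      rw [show ((z:ℂ) * u) = ((z*u : ℝ) : ℂ) by push_cast; ring]
      exact (aux_norm_exp_I (z*u)).le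
  have hsub : δ x - δ y = (1 / (2 * (Real.pi : ℂ))) *
      ∫ u : ℝ, (Complex.exp (Complex.I * x * u) - Complex.exp (Complex.I * y * u)) * g u := by
    rw [hδ x, hδ y, ← mul_sub, ← integral_sub (hint x) (hint y)]
    congr 1
    apply integral_congr_ae
    filter_upwards with u
    ring
  rw [hsub, norm_mul]
  have hcn : ‖(1 / (2 * (Real.pi : ℂ)))‖ = 1 / (2 * Real.pi) := by
    simp [abs_of_pos Real.pi_pos]
  rw [hcn]
  apply mul_le_mul_of_nonneg_left ?_ (by positivity)
  apply norm_integral_le_of_norm_le hψ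
  filter_upwards with u
  rw [norm_mul]
  refine le_trans (mul_le_mul_of_nonneg_right ?_ (norm_nonneg _)) (hpt u)
  apply le_min
  · calc ‖Complex.exp (Complex.I * x * u) - Complex.exp (Complex.I * y * u)‖
        ≤ ‖Complex.exp (Complex.I * x * u)‖ + ‖Complex.exp (Complex.I * y * u)‖ :=
          norm_sub_le _ _
      _ = 2 := by
        rw [show (Complex.I * x * u) = Complex.I * ((x*u:ℝ):ℂ) by push_cast; ring,
          show (Complex.I * y * u) = Complex.I * ((y*u:ℝ):ℂ) by push_cast; ring,
          aux_norm_exp_I, aux_norm_exp_I]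
        norm_num
  · calc ‖Complex.exp (Complex.I * x * u) - Complex.exp (Complex.I * y * u)‖
        = ‖Complex.exp (Complex.I * ((x*u:ℝ):ℂ)) - Complex.exp (Complex.I * ((y*u:ℝ):ℂ))‖ := by
          rw [show (Complex.I * x * u) = Complex.I * ((x*u:ℝ):ℂ) by push_cast; ring,
            show (Complex.I * y * u) = Complex.I * ((y*u:ℝ):ℂ) by push_cast; ring]
      _ ≤ |x*u - y*u| := aux_exp_sub_exp (x*u) (y*u)
      _ = |u| * |x - y| := by rw [← abs_mul]; ring_nf

/- ------------ the two scale estimates ------------ -/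


lemma aux_scale1 (α : ℝ) (hα : 0 < α) (g : ℝ → ℂ) (hg : Integrable g)
    (hglog : Integrable (fun u : ℝ => Real.log (1 + |u|) ^ α * ‖g u‖))
    (δ : ℝ → ℂ)
    (hδ : ∀ x : ℝ, δ x =
      (1 / (2 * (Real.pi : ℂ))) * ∫ u : ℝ, Complex.exp (Complex.I * x * u) * g u)
    (m : ℕ) (x y h : ℝ) (hh : 0 < h) (hd : |x - y| = 2 ^ (m + 1) * h) :
    ‖δ x - δ y‖ ≤ (m + 1 : ℝ) ^ α *
      ((1 / Real.pi) * ∫ u : ℝ, Real.log (Real.exp α + |u| + 1) ^ α * ‖g u‖) *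
      Real.log (Real.exp α + 1 / h) ^ (-α) := by
  set s : ℝ := 1 / h with hsdef
  have hs : 0 < s := by positivity
  have hL0 : 0 < Real.log (Real.exp α + s) := by
    calc (0:ℝ) < α := hα
    _ = Real.log (Real.exp α) := (Real.log_exp α).symm
    _ ≤ Real.log (Real.exp α + s) := Real.log_le_log (Real.exp_pos α) (by linarith)
  set L : ℝ := Real.log (Real.exp α + s) with hLdef
  have hLα : 0 < L ^ α := Real.rpow_pos_of_pos hL0 α
  have hφ1 : Integrable (fun u : ℝ => Real.log (Real.exp α + |u| + 1) ^ α * ‖g u‖) := by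
    apply aux_integrable α hα g hg hglog
    · exact ((continuous_const.add continuous_abs).add continuous_const).measurable
    · intro u
      have h1 := Real.one_le_exp hα.le
      have h2 := abs_nonneg u
      linarith
    · intro u
      have he := Real.exp_pos α
      have h2 := abs_nonneg u
      nlinarith
  set c : ℝ := 2 * (m + 1 : ℝ) ^ α * L ^ (-α) with hcdef
  have hψ : Integrable (fun u : ℝ =>
      c * (Real.log (Real.exp α + |u| + 1) ^ α * ‖g u‖)) := hφ1.const_mul c
  have hpt : ∀ u : ℝ, min 2 (|u| * |x - y|) * ‖g u‖ ≤
      c * (Real.log (Real.exp α + |u| + 1) ^ α * ‖g u‖) := by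
    intro u
    have ha : (0:ℝ) ≤ 2 ^ m * |u| := by positivity
    have hone : (1:ℝ) ≤ Real.exp α := Real.one_le_exp hα.le
    have habs := abs_nonneg u
    have hφ0 : 0 ≤ Real.log (Real.exp α + |u| + 1) := Real.log_nonneg (by linarith)
    have hrw : |u| * |x - y| = 2 * (2 ^ m * |u|) / s := by
      rw [hd, hsdef]
      field_simp
      try ring
    have h2 : Real.log (Real.exp α + 2 ^ m * |u|) ^ α
        ≤ (m + 1 : ℝ) ^ α * Real.log (Real.exp α + |u| + 1) ^ α := by
      have hlog := aux_dyadic_log α hα m (abs_nonneg u)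
      have hb : 0 ≤ Real.log (Real.exp α + 2 ^ m * |u|) :=
        Real.log_nonneg (by nlinarith [one_le_pow₀ (by norm_num : (1:ℝ) ≤ 2) (n := m)])
      calc Real.log (Real.exp α + 2 ^ m * |u|) ^ α
          ≤ ((m + 1 : ℝ) * Real.log (Real.exp α + |u| + 1)) ^ α :=
            Real.rpow_le_rpow hb hlog hα.le
        _ = (m + 1 : ℝ) ^ α * Real.log (Real.exp α + |u| + 1) ^ α :=
            Real.mul_rpow (by positivity) hφ0
    have hmin : min 2 (|u| * |x - y|) ≤
        2 * (m + 1 : ℝ) ^ α * Real.log (Real.exp α + |u| + 1) ^ α * L ^ (-α) := by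
      rw [hrw, Real.rpow_neg hL0.le, ← div_eq_mul_inv, le_div_iff₀ hLα]
      calc min 2 (2 * (2 ^ m * |u|) / s) * L ^ α
          ≤ 2 * Real.log (Real.exp α + 2 ^ m * |u|) ^ α := aux_min α hα hs ha
        _ ≤ 2 * ((m + 1 : ℝ) ^ α * Real.log (Real.exp α + |u| + 1) ^ α) := by linarith
        _ = 2 * (m + 1 : ℝ) ^ α * Real.log (Real.exp α + |u| + 1) ^ α := by ring
    calc min 2 (|u| * |x - y|) * ‖g u‖
        ≤ (2 * (m + 1 : ℝ) ^ α * Real.log (Real.exp α + |u| + 1) ^ α * L ^ (-α)) * ‖g u‖ :=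
          mul_le_mul_of_nonneg_right hmin (norm_nonneg _)
      _ = c * (Real.log (Real.exp α + |u| + 1) ^ α * ‖g u‖) := by rw [hcdef]; ring
  have hbound := aux_core g hg δ hδ x y _ hψ hpt
  refine hbound.trans (le_of_eq ?_)
  rw [MeasureTheory.integral_const_mul, hcdef]
  have hπ := Real.pi_ne_zero
  field_simp

lemma aux_scale0 (α : ℝ) (hα : 0 < α) (g : ℝ → ℂ) (hg : Integrable g)
    (hglog : Integrable (fun u : ℝ => Real.log (1 + |u|) ^ α * ‖g u‖))
    (δ : ℝ → ℂ)
    (hδ : ∀ x : ℝ, δ x =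
      (1 / (2 * (Real.pi : ℂ))) * ∫ u : ℝ, Complex.exp (Complex.I * x * u) * g u)
    (x y h : ℝ) (hh : 0 < h) (hd : |x - y| = h) :
    ‖δ x - δ y‖ ≤
      ((1 / Real.pi) * ∫ u : ℝ, Real.log (Real.exp α + |u| / 2) ^ α * ‖g u‖) *
      Real.log (Real.exp α + 1 / h) ^ (-α) := by
  set s : ℝ := 1 / h with hsdef
  have hs : 0 < s := by positivity
  have hL0 : 0 < Real.log (Real.exp α + s) := by
    calc (0:ℝ) < α := hα
    _ = Real.log (Real.exp α) := (Real.log_exp α).symm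
    _ ≤ Real.log (Real.exp α + s) := Real.log_le_log (Real.exp_pos α) (by linarith)
  set L : ℝ := Real.log (Real.exp α + s) with hLdef
  have hLα : 0 < L ^ α := Real.rpow_pos_of_pos hL0 α
  have hφ0 : Integrable (fun u : ℝ => Real.log (Real.exp α + |u| / 2) ^ α * ‖g u‖) := by
    apply aux_integrable α hα g hg hglog
    · exact (continuous_const.add (continuous_abs.div_const 2)).measurable
    · intro u
      have h1 := Real.one_le_exp hα.le
      have h2 := abs_nonneg u
      linarith
    · intro u
      have he := Real.exp_pos α
      have h2 := abs_nonneg u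
      nlinarith
  set c : ℝ := 2 * L ^ (-α) with hcdef
  have hψ : Integrable (fun u : ℝ =>
      c * (Real.log (Real.exp α + |u| / 2) ^ α * ‖g u‖)) := hφ0.const_mul c
  have hpt : ∀ u : ℝ, min 2 (|u| * |x - y|) * ‖g u‖ ≤
      c * (Real.log (Real.exp α + |u| / 2) ^ α * ‖g u‖) := by
    intro u
    have ha : (0:ℝ) ≤ |u| / 2 := by positivity
    have hrw : |u| * |x - y| = 2 * (|u| / 2) / s := by
      rw [hd, hsdef]
      field_simp
      try ring
    have hmin : min 2 (|u| * |x - y|) ≤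
        2 * Real.log (Real.exp α + |u| / 2) ^ α * L ^ (-α) := by
      rw [hrw, Real.rpow_neg hL0.le, ← div_eq_mul_inv, le_div_iff₀ hLα]
      exact aux_min α hα hs ha
    calc min 2 (|u| * |x - y|) * ‖g u‖
        ≤ (2 * Real.log (Real.exp α + |u| / 2) ^ α * L ^ (-α)) * ‖g u‖ :=
          mul_le_mul_of_nonneg_right hmin (norm_nonneg _)
      _ = c * (Real.log (Real.exp α + |u| / 2) ^ α * ‖g u‖) := by rw [hcdef]; ring
  have hbound := aux_core g hg δ hδ x y _ hψ hpt
  refine hbound.trans (le_of_eq ?_)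
  rw [MeasureTheory.integral_const_mul, hcdef]
  have hπ := Real.pi_ne_zero
  field_simp

/-- Lemma 4.2 -/
theorem dyadic_translates_log_modulus
    (α : ℝ) (hα : 0 < α)
    (g : ℝ → ℂ) (hg : Integrable g)
    (hglog : Integrable (fun u : ℝ => Real.log (1 + |u|) ^ α * ‖g u‖))
    (δ : ℝ → ℂ)
    (hδ : ∀ x : ℝ, δ x =
      (1 / (2 * (Real.pi : ℂ))) * ∫ u : ℝ, Complex.exp (Complex.I * x * u) * g u)
    (δjk : ℕ → ℤ → ℝ → ℂ)
    (hδjk : ∀ (j : ℕ) (k : ℤ) (x : ℝ),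
      δjk j k x = (((2 : ℝ) ^ ((j : ℝ) / 2) : ℝ) : ℂ) * δ ((2 : ℝ) ^ j * x - (k : ℝ)))
    (R0 R1 : ℝ)
    (hR0 : R0 = (1 / Real.pi) * ∫ u : ℝ, Real.log (Real.exp α + |u| / 2) ^ α * ‖g u‖)
    (hR1 : R1 = (1 / Real.pi) * ∫ u : ℝ, Real.log (Real.exp α + |u| + 1) ^ α * ‖g u‖) :
    (∀ (k : ℤ) (x y : ℝ), x ≠ y →
      ‖δjk 0 k x - δjk 0 k y‖ ≤ R0 * Real.log (Real.exp α + 1 / |x - y|) ^ (-α)) ∧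
    ∀ j : ℕ, 1 ≤ j → ∀ (k : ℤ) (x y : ℝ), x ≠ y →
      ‖δjk j k x - δjk j k y‖ ≤
        (2 : ℝ) ^ ((j : ℝ) / 2) * (j : ℝ) ^ α * R1 *
          Real.log (Real.exp α + 1 / |x - y|) ^ (-α) := by
  constructor
  · intro k x y hxy
    have hh : 0 < |x - y| := abs_pos.2 (sub_ne_zero.2 hxy)
    have hco : (((2 : ℝ) ^ (((0:ℕ) : ℝ) / 2) : ℝ) : ℂ) = 1 := by
      norm_num
    have heq : δjk 0 k x - δjk 0 k y = δ (x - k) - δ (y - k) := by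
      rw [hδjk 0 k x, hδjk 0 k y, hco]
      norm_num
    rw [heq, hR0]
    have hd : |(x - k) - (y - k)| = |x - y| := by ring_nf
    exact aux_scale0 α hα g hg hglog δ hδ (x - k) (y - k) |x - y| hh hd
  · intro j hj k x y hxy
    obtain ⟨m, rfl⟩ : ∃ m : ℕ, j = m + 1 := ⟨j - 1, (Nat.succ_pred_eq_of_pos hj).symm⟩
    have hh : 0 < |x - y| := abs_pos.2 (sub_ne_zero.2 hxy)
    set c : ℝ := (2 : ℝ) ^ (((m + 1 : ℕ) : ℝ) / 2) with hcdef
    have hc : 0 < c := Real.rpow_pos_of_pos (by norm_num) _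
    have heq : δjk (m + 1) k x - δjk (m + 1) k y =
        (c : ℂ) * (δ ((2:ℝ) ^ (m+1) * x - k) - δ ((2:ℝ) ^ (m+1) * y - k)) := by
      rw [hδjk (m+1) k x, hδjk (m+1) k y, mul_sub]
    have hd : |((2:ℝ) ^ (m+1) * x - k) - ((2:ℝ) ^ (m+1) * y - k)| = 2 ^ (m + 1) * |x - y| := by
      rw [show ((2:ℝ) ^ (m+1) * x - k) - ((2:ℝ) ^ (m+1) * y - k) = 2 ^ (m+1) * (x - y) by ring,
        abs_mul, abs_of_pos (by positivity : (0:ℝ) < (2:ℝ) ^ (m+1))]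
    have hb := aux_scale1 α hα g hg hglog δ hδ m
      ((2:ℝ) ^ (m+1) * x - k) ((2:ℝ) ^ (m+1) * y - k) |x - y| hh hd
    rw [heq, norm_mul, Complex.norm_real, Real.norm_of_nonneg hc.le]
    calc c * ‖δ ((2:ℝ) ^ (m+1) * x - k) - δ ((2:ℝ) ^ (m+1) * y - k)‖
        ≤ c * ((m + 1 : ℝ) ^ α *
            ((1 / Real.pi) * ∫ u : ℝ, Real.log (Real.exp α + |u| + 1) ^ α * ‖g u‖) *
            Real.log (Real.exp α + 1 / |x - y|) ^ (-α)) :=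
          mul_le_mul_of_nonneg_left hb hc.le
      _ = (2 : ℝ) ^ (((m + 1 : ℕ) : ℝ) / 2) * ((m + 1 : ℕ) : ℝ) ^ α * R1 *
            Real.log (Real.exp α + 1 / |x - y|) ^ (-α) := by
          rw [hR1, hcdef]
          push_cast
          ring
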